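/- Let M ≥ 1. If ⁅Φ, P (2m)⁆ = 0 holds for all m with 1 ≤ m ≤ M, then ⁅Φ, ⁅Φ, P (2M+2)⁆⁆ = 0. (The key lemma of the Supplemental Material's rigorous proof.) -/

import Mathlib

/-- key lemma of the Supplemental Material: In a Lie ring `L`,
with `P 1 = Φ` and `P (n+1) = ⁅B, P n⁆` for `n ≥ 1`, if `⁅Φ, P (2m)⁆ = 0` for
all `1 ≤ m ≤ M`, then `⁅Φ, ⁅Φ, P (2M+2)⁆⁆ = 0`. -/
theorem double_commutator_key_lemma {L : Type*} [LieRing L] (B Φ : L)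
    (P : ℕ → L) (hP1 : P 1 = Φ)
    (hPrec : ∀ n, 1 ≤ n → P (n + 1) = ⁅B, P n⁆)
    (M : ℕ) (hM : 1 ≤ M)
    (h : ∀ m, 1 ≤ m → m ≤ M → ⁅Φ, P (2 * m)⁆ = 0) :
    ⁅Φ, ⁅Φ, P (2 * M + 2)⁆⁆ = 0 := by
  -- Basic recurrence: if ⁅P i, P j⁆ = 0 then ⁅P (i+1), P j⁆ = -⁅P i, P (j+1)⁆.
  have hstep : ∀ i j, 1 ≤ i → 1 ≤ j → ⁅P i, P j⁆ = 0 →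
      ⁅P (i + 1), P j⁆ = -⁅P i, P (j + 1)⁆ := by
    intro i j hi hj h0
    rw [hPrec i hi, hPrec j hj, lie_lie, h0, lie_zero, zero_sub]
  -- Main lemma: all brackets ⁅P i, P j⁆ with i + j ≤ 2M + 2 vanish.
  have main : ∀ s, s ≤ 2 * M + 2 → ∀ i j, 1 ≤ i → 1 ≤ j → i + j = s →
      ⁅P i, P j⁆ = 0 := by
    intro s
    induction s using Nat.strong_induction_on with
    | _ s IH =>
      intro hs i j hi hj hij
      by_cases hs2 : s ≤ 2
      · -- base case: i = j = 1
        have hi1 : i = 1 := by omega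
        have hj1 : j = 1 := by omega
        subst hi1; subst hj1
        rw [hP1]; exact lie_self Φ
      · -- s ≥ 3.  Recurrence within level s:
        have hrec : ∀ a b, 1 ≤ a → 1 ≤ b → a + b + 1 = s →
            ⁅P (a + 1), P b⁆ = -⁅P a, P (b + 1)⁆ := by
          intro a b ha hb hab
          exact hstep a b ha hb (IH (a + b) (by omega) (by omega) a b ha hb rfl)
        -- anchor: ⁅P 1, P (s-1)⁆ = 0
        have anchor : ∀ b, 1 + b = s → ⁅P 1, P b⁆ = 0 := by
          rcases Nat.even_or_odd s with ⟨t, ht⟩ | ⟨m, hm⟩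
          · -- even case: descend from the middle ⁅P t, P t⁆ = 0
            have ht2 : 2 ≤ t := by omega
            have desc : ∀ d a b, 1 ≤ a → a + b = s → b = t + d →
                ⁅P a, P b⁆ = 0 := by
              intro d
              induction d with
              | zero =>
                intro a b ha hab hb
                have ha' : a = t := by omega
                have hb' : b = t := by omega
                rw [ha', hb']
                exact lie_self _
              | succ d hd =>
                intro a b ha hab hb
                have e := hrec a (t + d) ha (by omega) (by omega)
                have z := hd (a + 1) (t + d) (by omega) (by omega) rfl
                have hb' : b = t + d + 1 := by omega
                rw [hb']
                rw [z] at e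
                exact neg_eq_zero.mp e.symm
            intro b hb
            exact desc (t - 1) 1 b le_rfl (by omega) (by omega)
          · -- odd case: s = 2m + 1, anchor is the hypothesis
            intro b hb
            have hb' : b = 2 * m := by omega
            subst hb'
            rw [hP1]
            exact h m (by omega) (by omega)
        -- ascend from the anchor
        have asc : ∀ a b, 1 ≤ b → a + 1 + b = s → ⁅P (a + 1), P b⁆ = 0 := by
          intro a
          induction a with
          | zero =>
            intro b hb hab
            exact anchor b (by omega)
          | succ a hd =>
            intro b hb hab
            have e := hrec (a + 1) b (by omega) hb (by omega)
            have z := hd (b + 1) (by omega) (by omega)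
            rw [e, z, neg_zero]
        obtain ⟨i', rfl⟩ : ∃ i', i = i' + 1 := ⟨i - 1, by omega⟩
        exact asc i' j hj (by omega)
  -- Now the conclusion.
  have h1 : ⁅P 1, P (2 * M + 1)⁆ = 0 :=
    main (2 * M + 2) le_rfl 1 (2 * M + 1) (by omega) (by omega) (by omega)
  have h2 : ⁅P 2, P (2 * M + 1)⁆ = -⁅P 1, P (2 * M + 2)⁆ := by
    have := hstep 1 (2 * M + 1) le_rfl (by omega) h1
    simpa using this
  have h3 : ⁅P 1, P 2⁆ = 0 :=
    main 3 (by omega) 1 2 (by omega) (by omega) (by omega)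
  have key : ⁅P 1, P (2 * M + 2)⁆ = -⁅P 2, P (2 * M + 1)⁆ := by
    rw [h2, neg_neg]
  rw [← hP1, key]
  rw [lie_neg, leibniz_lie, h3, h1, zero_lie, lie_zero, add_zero, neg_zero]
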